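/- arXiv:1306.5966 — 8 statements merged into one kernel-verified Lean document; each statement's English description precedes it below -/
import Mathlib

section
/- Let R > 0, R_g ∈ ℝ, k ≥ 0, and let ρ : [0,R] → ℝ be continuous with ρ(r) ≥ 0 for all r ∈ [0,R]. Let χ : [0,R] → ℝ be twice continuously differentiable with χ''(r) = k·ρ(r)·χ(r) for all r ∈ [0,R], χ(0) = 0, χ'(R) = 1, and χ(R) = R − R_g. Then R_g ≤ R. Equivalently, the gravitational mass M_g defined by R_g = G·M_g/(2c²) (with G, c > 0) satisfies M_g ≤ 2c²R/G. -/
/-- The paper's Theorem in ODE form: if `χ` solves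
`χ'' = k·ρ·χ` on `[0,R]` with `ρ ≥ 0` continuous, `k ≥ 0`, `χ(0) = 0`,
`χ'(R) = 1` and `χ(R) = R − R_g`, then `R_g ≤ R`; equivalently, with
`R_g = G·M_g/(2c²)`, the gravitational mass satisfies `M_g ≤ 2c²R/G`. -/
theorem prague_mass_bound
    (R R_g k G c M_g : ℝ) (hR : 0 < R) (hk : 0 ≤ k) (hG : 0 < G) (hc : 0 < c)
    (ρ χ χ' χ'' : ℝ → ℝ)
    (hρcont : ContinuousOn ρ (Set.Icc 0 R))
    (hρnonneg : ∀ r ∈ Set.Icc (0:ℝ) R, 0 ≤ ρ r)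
    (hχ : ∀ r ∈ Set.Icc (0:ℝ) R, HasDerivWithinAt χ (χ' r) (Set.Icc 0 R) r)
    (hχ' : ∀ r ∈ Set.Icc (0:ℝ) R, HasDerivWithinAt χ' (χ'' r) (Set.Icc 0 R) r)
    (hχ''cont : ContinuousOn χ'' (Set.Icc 0 R))
    (hode : ∀ r ∈ Set.Icc (0:ℝ) R, χ'' r = k * ρ r * χ r)
    (h0 : χ 0 = 0) (hdR : χ' R = 1) (hvR : χ R = R - R_g)
    (hMg : R_g = G * M_g / (2 * c ^ 2)) :
    R_g ≤ R ∧ M_g ≤ 2 * c ^ 2 * R / G := by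
  have hcont : ContinuousOn χ (Set.Icc 0 R) := fun x hx => (hχ x hx).continuousWithinAt
  have hcont' : ContinuousOn χ' (Set.Icc 0 R) := fun x hx => (hχ' x hx).continuousWithinAt
  have key : 0 ≤ χ R := by
    by_contra hneg
    push_neg at hneg
    set S : Set ℝ := Set.Icc (0:ℝ) R ∩ χ ⁻¹' {0} with hSdef
    have hSclosed : IsClosed S :=
      hcont.preimage_isClosed_of_isClosed isClosed_Icc isClosed_singleton
    have hScomp : IsCompact S :=
      isCompact_Icc.of_isClosed_subset hSclosed Set.inter_subset_left
    have h0S : (0:ℝ) ∈ S := ⟨Set.left_mem_Icc.2 hR.le, by simp [h0]⟩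
    set a := sSup S with ha_def
    have haS : a ∈ S := hScomp.sSup_mem ⟨0, h0S⟩
    have ha0 : 0 ≤ a := haS.1.1
    have haR : a ≤ R := haS.1.2
    have haz : χ a = 0 := haS.2
    have haltR : a < R := lt_of_le_of_ne haR (fun h => by rw [h] at haz; linarith)
    have hnegOn : ∀ r ∈ Set.Ioc a R, χ r < 0 := by
      intro r hr
      by_contra hge
      push_neg at hge
      have hr0 : 0 ≤ r := le_trans ha0 hr.1.le
      have hsub : Set.Icc r R ⊆ Set.Icc (0:ℝ) R := Set.Icc_subset_Icc hr0 le_rfl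
      obtain ⟨z, hz, hz0⟩ := intermediate_value_Icc' hr.2 (hcont.mono hsub)
        (⟨hneg.le, hge⟩ : (0:ℝ) ∈ Set.Icc (χ R) (χ r))
      have hzS : z ∈ S := ⟨⟨le_trans hr0 hz.1, hz.2⟩, by simp [hz0]⟩
      have : z ≤ a := le_csSup hScomp.bddAbove hzS
      linarith [hr.1, hz.1]
    obtain ⟨ξ, hξ, hξeq⟩ := exists_hasDerivAt_eq_slope χ χ' haltR
      (hcont.mono (Set.Icc_subset_Icc ha0 le_rfl))
      (fun x hx => (hχ x ⟨le_trans ha0 hx.1.le, hx.2.le⟩).hasDerivAt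
        (Icc_mem_nhds (lt_of_le_of_lt ha0 hx.1) hx.2))
    have hξ0 : 0 < ξ := lt_of_le_of_lt ha0 hξ.1
    have hχ'ξ : χ' ξ < 0 := by
      rw [hξeq, haz]
      apply div_neg_of_neg_of_pos
      · linarith
      · linarith [hξ.2, haltR]
    obtain ⟨η, hη, hηeq⟩ := exists_hasDerivAt_eq_slope χ' χ'' hξ.2
      (hcont'.mono (Set.Icc_subset_Icc hξ0.le le_rfl))
      (fun x hx => (hχ' x ⟨le_trans hξ0.le hx.1.le, hx.2.le⟩).hasDerivAt
        (Icc_mem_nhds (lt_of_le_of_lt hξ0.le hx.1) hx.2))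
    have hηmem : η ∈ Set.Icc (0:ℝ) R := ⟨le_trans hξ0.le hη.1.le, hη.2.le⟩
    have hχη : χ η < 0 := hnegOn η ⟨lt_trans hξ.1 hη.1, hη.2.le⟩
    have hη2 : χ'' η ≤ 0 := by
      rw [hode η hηmem]
      exact mul_nonpos_of_nonneg_of_nonpos (mul_nonneg hk (hρnonneg η hηmem)) hχη.le
    rw [hηeq, hdR] at hη2
    have hden : 0 < R - ξ := by linarith [hξ.2]
    have : (1 - χ' ξ) / (R - ξ) > 0 := div_pos (by linarith) hden
    linarith
  refine ⟨by linarith [hvR ▸ key], ?_⟩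
  have hRg : R_g ≤ R := by linarith [hvR ▸ key]
  have hc2 : (0:ℝ) < 2 * c ^ 2 := by positivity
  rw [le_div_iff₀ hG]
  have : G * M_g = R_g * (2 * c ^ 2) := by
    field_simp at hMg; linarith
  nlinarith
end

section
/- Let R > 0 and let f : [0,R] → ℝ be twice continuously differentiable with f(0) = 0, f'(R) = 1, and such that for every r ∈ [0,R], if f(r) ≤ 0 then f''(r) ≤ 0. Then f(R) ≥ 0. -/
/-- The concavity argument: if `f` is twice continuously
differentiable on `[0,R]` with `f(0) = 0`, `f'(R) = 1`, and `f'' ≤ 0` wherever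
`f ≤ 0`, then `f(R) ≥ 0`. -/
theorem concavity_endpoint_nonneg
    (R : ℝ) (hR : 0 < R) (f f' f'' : ℝ → ℝ)
    (hf : ∀ r ∈ Set.Icc (0:ℝ) R, HasDerivWithinAt f (f' r) (Set.Icc 0 R) r)
    (hf' : ∀ r ∈ Set.Icc (0:ℝ) R, HasDerivWithinAt f' (f'' r) (Set.Icc 0 R) r)
    (hf''cont : ContinuousOn f'' (Set.Icc 0 R))
    (h0 : f 0 = 0) (hdR : f' R = 1)
    (hconc : ∀ r ∈ Set.Icc (0:ℝ) R, f r ≤ 0 → f'' r ≤ 0) :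
    0 ≤ f R := by
  by_contra hcon
  push_neg at hcon
  have hfc : ContinuousOn f (Set.Icc 0 R) := fun r hr => (hf r hr).continuousWithinAt
  have hfc' : ContinuousOn f' (Set.Icc 0 R) := fun r hr => (hf' r hr).continuousWithinAt
  set S : Set ℝ := {r | r ∈ Set.Icc (0:ℝ) R ∧ f r = 0} with hS
  have h0S : (0:ℝ) ∈ S := ⟨⟨le_refl 0, hR.le⟩, h0⟩
  have hSne : S.Nonempty := ⟨0, h0S⟩
  have hSbdd : BddAbove S := ⟨R, fun x hx => hx.1.2⟩
  set s := sSup S with hs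
  have hSclosed : IsClosed S := by
    have hSeq : S = Set.Icc 0 R ∩ f ⁻¹' {0} := by
      ext x; simp [hS, Set.mem_setOf_eq]
    rw [hSeq]
    exact hfc.preimage_isClosed_of_isClosed isClosed_Icc isClosed_singleton
  have hsS : s ∈ S := hSclosed.csSup_mem hSne hSbdd
  have hs0 : 0 ≤ s := le_csSup hSbdd h0S
  have hsR : s ≤ R := csSup_le hSne fun x hx => hx.1.2
  have hfs : f s = 0 := hsS.2
  have hsltR : s < R := hsR.lt_of_ne (fun h => by rw [h] at hfs; linarith)
  have hsub : Set.Icc s R ⊆ Set.Icc (0:ℝ) R := Set.Icc_subset_Icc hs0 le_rfl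
  -- f ≤ 0 on [s, R]
  have hle : ∀ r ∈ Set.Icc s R, f r ≤ 0 := by
    intro r hr
    by_contra hpos
    push_neg at hpos
    have hrR : r ≤ R := hr.2
    have : (0:ℝ) ∈ Set.Icc (f R) (f r) := ⟨hcon.le, hpos.le⟩
    obtain ⟨z, hz, hfz⟩ := intermediate_value_Icc' hrR (hfc.mono (Set.Icc_subset_Icc
      (le_trans hs0 hr.1) le_rfl)) this
    have hzS : z ∈ S := ⟨⟨le_trans (le_trans hs0 hr.1) hz.1, hz.2⟩, hfz⟩
    have : z ≤ s := le_csSup hSbdd hzS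
    have hrs : s < r := (hr.1).lt_of_ne (fun h => by rw [← h] at hpos; linarith [hfs])
    linarith [hz.1]
  -- f' is antitone on [s,R], hence f' ≥ 1 there
  have hint : interior (Set.Icc s R) = Set.Ioo s R := interior_Icc
  have hanti : AntitoneOn f' (Set.Icc s R) := by
    apply antitoneOn_of_hasDerivWithinAt_nonpos (convex_Icc s R)
      (hfc'.mono hsub)
    · intro x hx
      rw [hint] at hx
      exact ((hf' x (hsub (Set.Ioo_subset_Icc_self hx))).mono
        (by rw [hint]; exact (Set.Ioo_subset_Icc_self).trans hsub))
    · intro x hx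
      rw [hint] at hx
      exact hconc x (hsub (Set.Ioo_subset_Icc_self hx))
        (hle x (Set.Ioo_subset_Icc_self hx))
  have hge1 : ∀ x ∈ Set.Icc s R, 1 ≤ f' x := by
    intro x hx
    have := hanti hx (Set.right_mem_Icc.mpr hsR) hx.2
    rwa [hdR] at this
  -- g r = f r - r is monotone on [s,R]
  have hmono : MonotoneOn (fun r => f r - r) (Set.Icc s R) := by
    apply monotoneOn_of_hasDerivWithinAt_nonneg (f' := fun r => f' r - 1) (convex_Icc s R)
      ((hfc.mono hsub).sub continuousOn_id)
    · intro x hx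
      rw [hint] at hx
      exact ((hf x (hsub (Set.Ioo_subset_Icc_self hx))).mono
        (by rw [hint]; exact (Set.Ioo_subset_Icc_self).trans hsub)).sub
        ((hasDerivAt_id x).hasDerivWithinAt)
    · intro x hx
      rw [hint] at hx
      linarith [hge1 x (Set.Ioo_subset_Icc_self hx)]
  have := hmono (Set.left_mem_Icc.mpr hsR) (Set.right_mem_Icc.mpr hsR) hsR
  simp only [hfs] at this
  linarith
end

section
/- Let G, c > 0 be real constants, let ρ : ℝ³ → ℝ be a function, and let Ψ : ℝ³ → ℝ be twice continuously differentiable with Ψ(x) > 0 for all x. Define Φ := c²·Ψ². Then Ψ satisfies ΔΨ = (2πG/c²)·ρ·Ψ everywhere on ℝ³ if and only if Φ satisfies the Prague field equation ΔΦ = (4πG/c²)·[ρ·Φ + (c²/(8πG))·‖∇Φ‖²/Φ] everywhere on ℝ³, where Δ is the Euclidean Laplacian and ∇ the gradient on ℝ³. -/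
open Real

/-- The `i`-th partial derivative of a function on Euclidean `ℝ³`. -/
noncomputable def pderiv3 (i : Fin 3) (f : EuclideanSpace ℝ (Fin 3) → ℝ)
    (x : EuclideanSpace ℝ (Fin 3)) : ℝ :=
  fderiv ℝ f x (EuclideanSpace.single i 1)

/-- The Euclidean Laplacian on `ℝ³`. -/
noncomputable def lap3 (f : EuclideanSpace ℝ (Fin 3) → ℝ)
    (x : EuclideanSpace ℝ (Fin 3)) : ℝ :=
  ∑ i, pderiv3 i (pderiv3 i f) x

/-- The squared norm of the gradient, `‖∇f‖²`, on `ℝ³`. -/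
noncomputable def gradSq3 (f : EuclideanSpace ℝ (Fin 3) → ℝ)
    (x : EuclideanSpace ℝ (Fin 3)) : ℝ :=
  ∑ i, (pderiv3 i f x) ^ 2

/-- For `Ψ > 0` of class `C²` and `Φ := c²Ψ²`, the linear
equation `ΔΨ = (2πG/c²)ρΨ` holds everywhere iff `Φ` satisfies Einstein's
1912 Prague field equation `ΔΦ = (4πG/c²)[ρΦ + (c²/(8πG))‖∇Φ‖²/Φ]`. -/
theorem prague_equation_linearisation
    (G c : ℝ) (hG : 0 < G) (hc : 0 < c)
    (ρ Ψ : EuclideanSpace ℝ (Fin 3) → ℝ)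
    (hΨ : ContDiff ℝ 2 Ψ) (hΨpos : ∀ x, 0 < Ψ x) :
    (∀ x, lap3 Ψ x = (2 * π * G / c ^ 2) * ρ x * Ψ x) ↔
    (∀ x, lap3 (fun y => c ^ 2 * (Ψ y) ^ 2) x =
      (4 * π * G / c ^ 2) *
        (ρ x * (c ^ 2 * (Ψ x) ^ 2) +
          (c ^ 2 / (8 * π * G)) *
            gradSq3 (fun y => c ^ 2 * (Ψ y) ^ 2) x / (c ^ 2 * (Ψ x) ^ 2))) := by
  have hΨd : Differentiable ℝ Ψ := hΨ.differentiable (by norm_num)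
  have hfd : ContDiff ℝ 1 (fderiv ℝ Ψ) := hΨ.fderiv_right (by norm_num)
  set e : Fin 3 → EuclideanSpace ℝ (Fin 3) := fun i => EuclideanSpace.single i 1 with he
  have hgd : ∀ i : Fin 3, Differentiable ℝ (fun x => fderiv ℝ Ψ x (e i)) :=
    fun i => (hfd.differentiable one_ne_zero).clm_apply (differentiable_const _)
  have hp1 : ∀ (i : Fin 3) x, pderiv3 i (fun y => c ^ 2 * (Ψ y) ^ 2) x
      = 2 * c ^ 2 * Ψ x * pderiv3 i Ψ x := by
    intro i x
    have h0 : (fun y => c ^ 2 * (Ψ y) ^ 2) = fun y => c ^ 2 * (Ψ y * Ψ y) := by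
      funext y; ring
    have h1 := ((hΨd x).hasFDerivAt.mul (hΨd x).hasFDerivAt).const_mul (c ^ 2)
    rw [pderiv3, h0, HasFDerivAt.fderiv (f := fun y => c ^ 2 * (Ψ y * Ψ y)) h1]
    simp [pderiv3]
    ring
  have hp2 : ∀ (i : Fin 3) x, pderiv3 i (pderiv3 i (fun y => c ^ 2 * (Ψ y) ^ 2)) x
      = 2 * c ^ 2 * ((pderiv3 i Ψ x) ^ 2 + Ψ x * pderiv3 i (pderiv3 i Ψ) x) := by
    intro i x
    have hfun : pderiv3 i (fun y => c ^ 2 * (Ψ y) ^ 2)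
        = fun y => (2 * c ^ 2) * (Ψ y * fderiv ℝ Ψ y (e i)) := by
      funext y; rw [hp1]; unfold pderiv3; rw [he]; ring
    have h1 := ((hΨd x).hasFDerivAt.mul ((hgd i) x).hasFDerivAt).const_mul (2 * c ^ 2)
    rw [pderiv3, hfun, HasFDerivAt.fderiv (f := fun y => (2 * c ^ 2) * (Ψ y * fderiv ℝ Ψ y (e i))) h1]
    have h2 : pderiv3 i (pderiv3 i Ψ) x = fderiv ℝ (fun y => fderiv ℝ Ψ y (e i)) x (e i) := rfl
    have h3 : pderiv3 i Ψ x = fderiv ℝ Ψ x (e i) := rfl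
    rw [h2, h3]
    simp
    ring
  have hlap : ∀ x, lap3 (fun y => c ^ 2 * (Ψ y) ^ 2) x
      = 2 * c ^ 2 * (gradSq3 Ψ x + Ψ x * lap3 Ψ x) := by
    intro x
    unfold lap3 gradSq3
    simp only [hp2, Fin.sum_univ_three]
    ring
  have hgrad : ∀ x, gradSq3 (fun y => c ^ 2 * (Ψ y) ^ 2) x
      = 4 * c ^ 4 * (Ψ x) ^ 2 * gradSq3 Ψ x := by
    intro x
    unfold gradSq3
    simp only [hp1, Fin.sum_univ_three]
    ring
  have hπ : π ≠ 0 := Real.pi_ne_zero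
  have hc0 : c ≠ 0 := ne_of_gt hc
  have hG0 : G ≠ 0 := ne_of_gt hG
  constructor
  · intro h x
    have hψ : Ψ x ≠ 0 := ne_of_gt (hΨpos x)
    rw [hlap, hgrad x, h x]
    field_simp
    ring
  · intro h x
    have hψ : Ψ x ≠ 0 := ne_of_gt (hΨpos x)
    have := h x
    rw [hlap, hgrad] at this
    field_simp at this ⊢
    have hψ3 : (0:ℝ) < 16 * π * G * c ^ 4 * (Ψ x) ^ 3 := by
      have := hΨpos x; positivity
    have key : (16 * π * G * c ^ 4 * (Ψ x) ^ 3) *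
        (lap3 Ψ x * c ^ 2 - 2 * π * G * ρ x * Ψ x) = 0 := by
      linear_combination (π * G * c ^ 4 * (Ψ x) ^ 2) * this
    have := (mul_eq_zero.mp key).resolve_left (ne_of_gt hψ3)
    linarith
end

section
/- Let G, c > 0 be real constants, let ρ : ℝ³ → ℝ be a function, and let Ψ : ℝ³ → ℝ be twice continuously differentiable with Ψ(x) > 0 for all x, satisfying ΔΨ = (4πG/c²)·ρ·Ψ everywhere on ℝ³. Define Φ := (c²/2)·Ψ². Then Φ satisfies ΔΦ = (8πG/c²)·[ρ·Φ + (c²/(16πG))·‖∇Φ‖²/Φ] everywhere on ℝ³, where Δ is the Euclidean Laplacian and ∇ the gradient on ℝ³. -/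
open Real

lemma pderiv3_differentiable (i : Fin 3) (Ψ : EuclideanSpace ℝ (Fin 3) → ℝ)
    (hΨ : ContDiff ℝ 2 Ψ) : Differentiable ℝ (pderiv3 i Ψ) := by
  have h1 : ContDiff ℝ 1 (fderiv ℝ Ψ) := hΨ.fderiv_right (by norm_num)
  exact ((ContinuousLinearMap.apply ℝ ℝ (EuclideanSpace.single i 1)).differentiable).comp
    (h1.differentiable one_ne_zero)

lemma pderiv3_mul (f g : EuclideanSpace ℝ (Fin 3) → ℝ) (x) (i : Fin 3)
    (hf : DifferentiableAt ℝ f x) (hg : DifferentiableAt ℝ g x) :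
    pderiv3 i (fun y => f y * g y) x = f x * pderiv3 i g x + g x * pderiv3 i f x := by
  unfold pderiv3
  rw [fderiv_fun_mul hf hg]
  simp [mul_comm]

lemma pderiv3_const_mul (a : ℝ) (f : EuclideanSpace ℝ (Fin 3) → ℝ) (x) (i : Fin 3)
    (hf : DifferentiableAt ℝ f x) :
    pderiv3 i (fun y => a * f y) x = a * pderiv3 i f x := by
  unfold pderiv3
  rw [fderiv_const_mul hf]
  simp

/-- If the lapse `Ψ > 0` is `C²` and satisfies
`ΔΨ = (4πG/c²)ρΨ` (the time component of Einstein's equations for static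
dust), then `Φ := (c²/2)Ψ²` satisfies the Prague-type equation
`ΔΦ = (8πG/c²)[ρΦ + (c²/(16πG))‖∇Φ‖²/Φ]`, i.e. the 1912 equation with
`G` replaced by `2G`. -/
theorem GR_static_dust_prague_form
    (G c : ℝ) (hG : 0 < G) (hc : 0 < c)
    (ρ Ψ : EuclideanSpace ℝ (Fin 3) → ℝ)
    (hΨ : ContDiff ℝ 2 Ψ) (hΨpos : ∀ x, 0 < Ψ x)
    (heq : ∀ x, lap3 Ψ x = (4 * π * G / c ^ 2) * ρ x * Ψ x) :
    ∀ x, lap3 (fun y => (c ^ 2 / 2) * (Ψ y) ^ 2) x =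
      (8 * π * G / c ^ 2) *
        (ρ x * ((c ^ 2 / 2) * (Ψ x) ^ 2) +
          (c ^ 2 / (16 * π * G)) *
            gradSq3 (fun y => (c ^ 2 / 2) * (Ψ y) ^ 2) x /
              ((c ^ 2 / 2) * (Ψ x) ^ 2)) := by
  intro x
  have hd : Differentiable ℝ Ψ := hΨ.differentiable (by norm_num)
  have hdp : ∀ i, Differentiable ℝ (pderiv3 i Ψ) := fun i =>
    pderiv3_differentiable i Ψ hΨ
  -- first derivative of Φ
  have hΦ1 : ∀ i, (pderiv3 i (fun y => (c ^ 2 / 2) * (Ψ y) ^ 2))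
      = fun y => c ^ 2 * (Ψ y * pderiv3 i Ψ y) := by
    intro i
    funext y
    simp only [pow_two]
    rw [pderiv3_const_mul _ (fun y => Ψ y * Ψ y) _ _ ((hd y).mul (hd y)),
      pderiv3_mul _ _ _ _ (hd y) (hd y)]
    ring
  -- second derivative of Φ
  have hΦ2 : ∀ i, pderiv3 i (pderiv3 i (fun y => (c ^ 2 / 2) * (Ψ y) ^ 2)) x
      = c ^ 2 * (Ψ x * pderiv3 i (pderiv3 i Ψ) x + (pderiv3 i Ψ x) ^ 2) := by
    intro i
    rw [hΦ1 i, pderiv3_const_mul _ (fun y => Ψ y * pderiv3 i Ψ y) _ _ ((hd x).mul ((hdp i) x)),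
      pderiv3_mul _ _ _ _ (hd x) ((hdp i) x)]
    ring
  -- Laplacian of Φ
  have hlap : lap3 (fun y => (c ^ 2 / 2) * (Ψ y) ^ 2) x
      = c ^ 2 * (Ψ x * lap3 Ψ x + ∑ i, (pderiv3 i Ψ x) ^ 2) := by
    unfold lap3
    rw [Finset.sum_congr rfl fun i _ => hΦ2 i]
    simp only [mul_add, Finset.sum_add_distrib, Finset.mul_sum]
  -- gradient squared of Φ
  have hgrad : gradSq3 (fun y => (c ^ 2 / 2) * (Ψ y) ^ 2) x
      = c ^ 4 * (Ψ x) ^ 2 * ∑ i, (pderiv3 i Ψ x) ^ 2 := by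
    unfold gradSq3
    rw [Finset.sum_congr rfl fun i _ => by rw [hΦ1 i]]
    rw [Finset.mul_sum]
    refine Finset.sum_congr rfl fun i _ => ?_
    ring
  rw [hlap, hgrad, heq x]
  have hπ : (0:ℝ) < π := pi_pos
  have hΨx := hΨpos x
  field_simp
  ring
end

section
/- Let ω, R > 0 and A, R_g ∈ ℝ. Define χ : (0,∞) → ℝ by χ(r) = A·sinh(ω·r) for r ≤ R and χ(r) = r − R_g for r > R. If χ is continuous at R and differentiable at R, then A = 1/(ω·cosh(ω·R)) and R_g = R − tanh(ω·R)/ω. In particular, if in addition ω = (1/R)·√(3·R_b/R) for some R_b > 0, then with x := R_b/R and y := R_g/R one has y = 1 − tanh(√(3x))/√(3x). -/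
open Real

/-- Matching the interior solution `χ(r) = A·sinh(ωr)` to
the exterior solution `χ(r) = r − R_g` at the star radius `R` (continuity
and differentiability at `R`) determines `A = 1/(ω·cosh(ωR))` and
`R_g = R − tanh(ωR)/ω`; in particular, if `ω = (1/R)√(3R_b/R)` then with
`x = R_b/R` and `y = R_g/R` one has `y = 1 − tanh(√(3x))/√(3x)`. -/
theorem homogeneous_star_matching
    (ω R A R_g : ℝ) (hω : 0 < ω) (hR : 0 < R)
    (χ : ℝ → ℝ)
    (hin : ∀ r : ℝ, 0 < r → r ≤ R → χ r = A * Real.sinh (ω * r))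
    (hout : ∀ r : ℝ, R < r → χ r = r - R_g)
    (hcont : ContinuousAt χ R) (hdiff : DifferentiableAt ℝ χ R) :
    A = 1 / (ω * Real.cosh (ω * R)) ∧
    R_g = R - Real.tanh (ω * R) / ω ∧
    ∀ R_b : ℝ, 0 < R_b → ω = (1 / R) * Real.sqrt (3 * R_b / R) →
      R_g / R = 1 - Real.tanh (Real.sqrt (3 * (R_b / R))) /
        Real.sqrt (3 * (R_b / R)) := by
  have hχR : χ R = A * Real.sinh (ω * R) := hin R hR le_rfl
  -- continuity at R : value from the right
  have hev : (fun r : ℝ => r - R_g) =ᶠ[nhdsWithin R (Set.Ioi R)] χ := by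
    filter_upwards [self_mem_nhdsWithin] with r hr
    exact (hout r hr).symm
  have h1 : Filter.Tendsto χ (nhdsWithin R (Set.Ioi R)) (nhds (R - R_g)) := by
    have h0 : Filter.Tendsto (fun r : ℝ => r - R_g) (nhdsWithin R (Set.Ioi R))
        (nhds (R - R_g)) :=
      ((continuous_id.sub continuous_const).tendsto R).mono_left nhdsWithin_le_nhds
    exact h0.congr' hev
  have h2 : Filter.Tendsto χ (nhdsWithin R (Set.Ioi R)) (nhds (χ R)) :=
    hcont.continuousWithinAt.tendsto
  have hcontEq : χ R = R - R_g := tendsto_nhds_unique h2 h1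
  -- derivative from the left
  set d := deriv χ R with hd_def
  have hd : HasDerivAt χ d R := hdiff.hasDerivAt
  have hg : HasDerivAt (fun r : ℝ => A * Real.sinh (ω * r))
      (A * (Real.cosh (ω * R) * ω)) R := by
    have h1 : HasDerivAt (fun x : ℝ => ω * x) ω R := by
      simpa using (hasDerivAt_id R).const_mul ω
    exact ((Real.hasDerivAt_sinh (ω * R)).comp R h1).const_mul A
  have hevL : χ =ᶠ[nhdsWithin R (Set.Iic R)] (fun r : ℝ => A * Real.sinh (ω * r)) := by
    have hpos : Set.Ioi (0 : ℝ) ∈ nhdsWithin R (Set.Iic R) :=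
      nhdsWithin_le_nhds (Ioi_mem_nhds hR)
    filter_upwards [hpos, self_mem_nhdsWithin] with r hr0 hrR
    exact hin r hr0 hrR
  have hL : HasDerivWithinAt χ (A * (Real.cosh (ω * R) * ω)) (Set.Iic R) R :=
    ((hg.hasDerivWithinAt (s := Set.Iic R)).congr_of_eventuallyEq hevL hχR)
  have hdL : A * (Real.cosh (ω * R) * ω) = d :=
    (uniqueDiffOn_Iic R R (by simp)).eq_deriv _ hL (hd.hasDerivWithinAt)
  -- derivative from the right
  have hevR : χ =ᶠ[nhdsWithin R (Set.Ici R)] (fun r : ℝ => r - R_g) := by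
    filter_upwards [self_mem_nhdsWithin] with r hr
    rcases eq_or_lt_of_le (Set.mem_Ici.mp hr) with h | h
    · rw [← h, hcontEq]
    · exact hout r h
  have hh : HasDerivAt (fun r : ℝ => r - R_g) 1 R := by
    simpa using (hasDerivAt_id R).sub_const R_g
  have hRt : HasDerivWithinAt χ 1 (Set.Ici R) R :=
    (hh.hasDerivWithinAt (s := Set.Ici R)).congr_of_eventuallyEq hevR hcontEq
  have hdR : (1 : ℝ) = d :=
    (uniqueDiffOn_Ici R R (by simp)).eq_deriv _ hRt (hd.hasDerivWithinAt)
  have hmatch : A * (Real.cosh (ω * R) * ω) = 1 := by rw [hdL, ← hdR]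
  have hcosh : Real.cosh (ω * R) ≠ 0 := ne_of_gt (Real.cosh_pos (x := ω * R))
  have hA : A = 1 / (ω * Real.cosh (ω * R)) := by
    field_simp at hmatch ⊢
    linarith [hmatch]
  have hRg : R_g = R - Real.tanh (ω * R) / ω := by
    have : A * Real.sinh (ω * R) = R - R_g := by rw [← hχR, hcontEq]
    rw [hA] at this
    rw [Real.tanh_eq_sinh_div_cosh]
    field_simp at this ⊢
    linarith [this]
  refine ⟨hA, hRg, ?_⟩
  intro R_b hRb hωeq
  set s := Real.sqrt (3 * (R_b / R)) with hs_def
  have hs_pos : 0 < s := Real.sqrt_pos.mpr (by positivity)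
  have hωR : ω * R = s := by
    rw [hωeq, hs_def, mul_div_assoc]
    field_simp
  have : R_g / R = 1 - Real.tanh (ω * R) / (ω * R) := by
    rw [hRg]
    field_simp
  rw [hωR] at this
  exact this
end

section
/- Define y : (0,∞) → ℝ by y(x) := 1 − tanh(√(3x))/√(3x). Then: (i) y is strictly increasing on (0,∞); (ii) 0 < y(x) < 1 for all x > 0; (iii) y(x) → 0 as x → 0⁺; (iv) y(x) → 1 as x → ∞. In particular, y is a strictly monotone bijection from (0,∞) onto (0,1). -/
open Real Filter Topology

private lemma tanh_eq (t : ℝ) : Real.tanh t = Real.sinh t / Real.cosh t :=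
  Real.tanh_eq_sinh_div_cosh t

private lemma my_continuous_tanh : Continuous Real.tanh := by
  have : Real.tanh = fun t => Real.sinh t / Real.cosh t := funext tanh_eq
  rw [this]
  exact Real.continuous_sinh.div Real.continuous_cosh fun t => (Real.cosh_pos t).ne'

private lemma my_hasDerivAt_tanh (t : ℝ) :
    HasDerivAt Real.tanh (1 / Real.cosh t ^ 2) t := by
  have h := (Real.hasDerivAt_sinh t).div (Real.hasDerivAt_cosh t) (Real.cosh_pos t).ne'
  have heq : (Real.cosh t * Real.cosh t - Real.sinh t * Real.sinh t) / Real.cosh t ^ 2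
      = 1 / Real.cosh t ^ 2 := by
    have := Real.cosh_sq_sub_sinh_sq t
    rw [show Real.cosh t * Real.cosh t - Real.sinh t * Real.sinh t
        = Real.cosh t ^ 2 - Real.sinh t ^ 2 by ring, this]
  rw [heq] at h
  exact h.congr_of_eventuallyEq (Filter.Eventually.of_forall fun y => tanh_eq y)

private lemma my_tanh_pos {t : ℝ} (ht : 0 < t) : 0 < Real.tanh t := by
  rw [_root_.tanh_eq]
  exact div_pos (Real.sinh_pos_iff.2 ht) (Real.cosh_pos t)

private lemma my_tanh_le_one (t : ℝ) : Real.tanh t ≤ 1 := by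
  rw [_root_.tanh_eq]
  exact le_of_lt ((div_lt_one (Real.cosh_pos t)).2 (Real.sinh_lt_cosh t))

private lemma sinh_lt_mul_cosh {t : ℝ} (ht : 0 < t) : Real.sinh t < t * Real.cosh t := by
  have mono : StrictMonoOn (fun s => s * Real.cosh s - Real.sinh s) (Set.Ici 0) := by
    apply strictMonoOn_of_deriv_pos (convex_Ici 0)
    · exact ((continuous_id.mul Real.continuous_cosh).sub Real.continuous_sinh).continuousOn
    · intro x hx
      rw [interior_Ici] at hx
      have hd : HasDerivAt (fun s => s * Real.cosh s - Real.sinh s)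
          ((1 * Real.cosh x + x * Real.sinh x) - Real.cosh x) x :=
        ((hasDerivAt_id x).mul (Real.hasDerivAt_cosh x)).sub (Real.hasDerivAt_sinh x)
      rw [hd.deriv]
      have : 0 < x * Real.sinh x := mul_pos hx (Real.sinh_pos_iff.2 hx)
      linarith
  have := mono (Set.self_mem_Ici) (Set.mem_Ici.2 ht.le) ht
  simp only [Real.sinh_zero, Real.cosh_zero, mul_one, zero_mul, sub_zero] at this
  linarith

private lemma my_tanh_lt_self {t : ℝ} (ht : 0 < t) : Real.tanh t < t := by
  rw [_root_.tanh_eq, div_lt_iff₀ (Real.cosh_pos t)]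
  exact sinh_lt_mul_cosh ht

/-- `tanh t / t` is strictly decreasing on `(0, ∞)`. -/
private lemma tanh_div_strictAnti : StrictAntiOn (fun t => Real.tanh t / t) (Set.Ioi 0) := by
  apply strictAntiOn_of_deriv_neg (convex_Ioi 0)
  · exact (my_continuous_tanh.continuousOn).div continuousOn_id fun x hx => ne_of_gt hx
  · intro x hx
    rw [interior_Ioi] at hx
    have hd : HasDerivAt (fun t => Real.tanh t / t)
        ((1 / Real.cosh x ^ 2 * x - Real.tanh x * 1) / x ^ 2) x :=
      (my_hasDerivAt_tanh x).div (hasDerivAt_id x) (ne_of_gt hx)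
    rw [hd.deriv]
    apply div_neg_of_neg_of_pos _ (pow_pos hx 2)
    have hc : (0 : ℝ) < Real.cosh x := Real.cosh_pos x
    have h1 : 1 < Real.cosh x := Real.one_lt_cosh.2 (ne_of_gt hx)
    have hs : 0 < Real.sinh x := Real.sinh_pos_iff.2 hx
    have hx' : x < Real.sinh x * Real.cosh x := by
      calc x < Real.sinh x := Real.self_lt_sinh_iff.2 hx
        _ = Real.sinh x * 1 := by ring
        _ < Real.sinh x * Real.cosh x := by
            exact mul_lt_mul_of_pos_left h1 hs
    have heq : 1 / Real.cosh x ^ 2 * x - Real.tanh x * 1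
        = (x - Real.sinh x * Real.cosh x) / Real.cosh x ^ 2 := by
      rw [_root_.tanh_eq]
      field_simp
    rw [heq]
    apply div_neg_of_neg_of_pos (by linarith) (by positivity)

private lemma my_sqrt_atTop : Tendsto Real.sqrt atTop atTop := by
  rw [tendsto_atTop_atTop]
  intro b
  refine ⟨b ^ 2, fun a ha => (le_abs_self b).trans ?_⟩
  rw [← Real.sqrt_sq_eq_abs]
  exact Real.sqrt_le_sqrt ha

private lemma y_bounds {x : ℝ} (hx : 0 < x) :
    0 < 1 - Real.tanh (Real.sqrt (3 * x)) / Real.sqrt (3 * x) ∧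
    1 - Real.tanh (Real.sqrt (3 * x)) / Real.sqrt (3 * x) < 1 := by
  have ht : 0 < Real.sqrt (3 * x) := Real.sqrt_pos.2 (by linarith)
  constructor
  · have : Real.tanh (Real.sqrt (3 * x)) / Real.sqrt (3 * x) < 1 :=
      (div_lt_one ht).2 (my_tanh_lt_self ht)
    linarith
  · have : 0 < Real.tanh (Real.sqrt (3 * x)) / Real.sqrt (3 * x) :=
      div_pos (my_tanh_pos ht) ht
    linarith

private lemma sqrt3_tendsto_zero :
    Tendsto (fun x : ℝ => Real.sqrt (3 * x)) (𝓝[>] 0) (𝓝[>] 0) := by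
  rw [tendsto_nhdsWithin_iff]
  constructor
  · have hc : Continuous fun x : ℝ => Real.sqrt (3 * x) :=
      Real.continuous_sqrt.comp (continuous_const.mul continuous_id)
    have := hc.tendsto 0
    simp only [mul_zero, Real.sqrt_zero] at this
    exact this.mono_left nhdsWithin_le_nhds
  · filter_upwards [self_mem_nhdsWithin] with x hx
    exact Real.sqrt_pos.2 (by simp only [Set.mem_Ioi] at hx; linarith)

private lemma tanh_div_tendsto_one :
    Tendsto (fun t : ℝ => Real.tanh t / t) (𝓝[≠] 0) (𝓝 1) := by
  have h := (hasDerivAt_iff_tendsto_slope).1 (my_hasDerivAt_tanh 0)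
  simp only [Real.cosh_zero, one_pow, div_one] at h
  refine h.congr fun t => ?_
  simp [slope_def_field, div_eq_div_iff, Real.tanh_zero]

private lemma tanh_div_tendsto_zero :
    Tendsto (fun t : ℝ => Real.tanh t / t) atTop (𝓝 0) := by
  apply tendsto_of_tendsto_of_tendsto_of_le_of_le' (tendsto_const_nhds (x := (0:ℝ)))
      tendsto_inv_atTop_zero
  · filter_upwards [eventually_gt_atTop (0 : ℝ)] with t ht
    exact div_nonneg (my_tanh_pos ht).le ht.le
  · filter_upwards [eventually_gt_atTop (0 : ℝ)] with t ht
    rw [div_le_iff₀ ht, inv_mul_cancel₀ (ne_of_gt ht)]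
    exact my_tanh_le_one t

/-- The homogeneous-star relation
`y(x) = 1 − tanh(√(3x))/√(3x)` is (i) strictly increasing on `(0,∞)`,
(ii) takes values in `(0,1)`, (iii) tends to `0` as `x → 0⁺`,
(iv) tends to `1` as `x → ∞`; in particular it is a strictly monotone
bijection from `(0,∞)` onto `(0,1)`. -/
theorem homogeneous_star_mass_relation_monotone :
    StrictMonoOn (fun x : ℝ => 1 - Real.tanh (Real.sqrt (3 * x)) / Real.sqrt (3 * x))
      (Set.Ioi 0) ∧
    (∀ x : ℝ, 0 < x →
      0 < 1 - Real.tanh (Real.sqrt (3 * x)) / Real.sqrt (3 * x) ∧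
      1 - Real.tanh (Real.sqrt (3 * x)) / Real.sqrt (3 * x) < 1) ∧
    Tendsto (fun x : ℝ => 1 - Real.tanh (Real.sqrt (3 * x)) / Real.sqrt (3 * x))
      (𝓝[>] 0) (𝓝 0) ∧
    Tendsto (fun x : ℝ => 1 - Real.tanh (Real.sqrt (3 * x)) / Real.sqrt (3 * x))
      atTop (𝓝 1) ∧
    Set.BijOn (fun x : ℝ => 1 - Real.tanh (Real.sqrt (3 * x)) / Real.sqrt (3 * x))
      (Set.Ioi 0) (Set.Ioo 0 1) := by
  set y : ℝ → ℝ := fun x => 1 - Real.tanh (Real.sqrt (3 * x)) / Real.sqrt (3 * x) with hy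
  have hmono : StrictMonoOn y (Set.Ioi 0) := by
    intro a ha b hb hab
    simp only [Set.mem_Ioi] at ha hb
    have hta : Real.sqrt (3 * a) ∈ Set.Ioi (0 : ℝ) :=
      Set.mem_Ioi.2 (Real.sqrt_pos.2 (by linarith))
    have htb : Real.sqrt (3 * b) ∈ Set.Ioi (0 : ℝ) :=
      Set.mem_Ioi.2 (Real.sqrt_pos.2 (by linarith))
    have hlt : Real.sqrt (3 * a) < Real.sqrt (3 * b) :=
      Real.sqrt_lt_sqrt (by linarith) (by linarith)
    have := tanh_div_strictAnti hta htb hlt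
    simp only at this
    show 1 - Real.tanh (Real.sqrt (3 * a)) / Real.sqrt (3 * a)
        < 1 - Real.tanh (Real.sqrt (3 * b)) / Real.sqrt (3 * b)
    linarith
  have hbdd : ∀ x : ℝ, 0 < x → 0 < y x ∧ y x < 1 := fun x hx => y_bounds hx
  have h3 : Tendsto y (𝓝[>] 0) (𝓝 0) := by
    have hcomp : Tendsto (fun x : ℝ => Real.tanh (Real.sqrt (3 * x)) / Real.sqrt (3 * x))
        (𝓝[>] 0) (𝓝 1) := by
      refine tanh_div_tendsto_one.comp (sqrt3_tendsto_zero.mono_right ?_)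
      exact nhdsWithin_mono _ fun t ht => ne_of_gt ht
    have := hcomp.const_sub 1
    rw [sub_self] at this
    exact this
  have h4 : Tendsto y atTop (𝓝 1) := by
    have hsq : Tendsto (fun x : ℝ => Real.sqrt (3 * x)) atTop atTop :=
      my_sqrt_atTop.comp (Tendsto.const_mul_atTop (by norm_num) tendsto_id)
    have hcomp : Tendsto (fun x : ℝ => Real.tanh (Real.sqrt (3 * x)) / Real.sqrt (3 * x))
        atTop (𝓝 0) := tanh_div_tendsto_zero.comp hsq
    have := hcomp.const_sub 1
    rw [sub_zero] at this
    exact this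
  refine ⟨hmono, hbdd, h3, h4, ?_, hmono.injOn, ?_⟩
  · intro x hx
    exact Set.mem_Ioo.2 (hbdd x (Set.mem_Ioi.1 hx))
  · intro c hc
    obtain ⟨hc0, hc1⟩ := Set.mem_Ioo.1 hc
    obtain ⟨a, hya, ha⟩ : ∃ a, y a < c ∧ a ∈ Set.Ioi (0 : ℝ) :=
      ((h3.eventually (gt_mem_nhds hc0)).and self_mem_nhdsWithin).exists
    obtain ⟨b, hyb, hb⟩ : ∃ b, c < y b ∧ a < b :=
      ((h4.eventually (lt_mem_nhds hc1)).and (eventually_gt_atTop a)).exists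
    have ha0 : (0 : ℝ) < a := Set.mem_Ioi.1 ha
    have hcont : ContinuousOn y (Set.Icc a b) := by
      apply ContinuousOn.sub continuousOn_const
      apply ContinuousOn.div
      · exact (my_continuous_tanh.comp
          (Real.continuous_sqrt.comp (continuous_const.mul continuous_id))).continuousOn
      · exact (Real.continuous_sqrt.comp (continuous_const.mul continuous_id)).continuousOn
      · intro x hx
        have : 0 < x := lt_of_lt_of_le ha0 hx.1
        exact ne_of_gt (Real.sqrt_pos.2 (by linarith))
    have := intermediate_value_Ioo hb.le hcont (Set.mem_Ioo.2 ⟨hya, hyb⟩)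
    obtain ⟨x, hx, hxy⟩ := this
    exact ⟨x, Set.mem_Ioi.2 (lt_trans ha0 hx.1), hxy⟩
end

section
/- Define g : (0,∞) → ℝ by g(x) := (1/x)·(1 − tanh(√(3x))/√(3x)). Then g is strictly decreasing on (0,∞): for all real x₁, x₂ with 0 < x₁ < x₂ one has g(x₂) < g(x₁). -/
open Real

section AuxMassRatio
open Set

lemma lem_kappa {u : ℝ} (hu : 0 < u) : Real.sinh u < u * Real.cosh u := by
  have hmono : StrictMonoOn (fun t : ℝ => t * Real.cosh t - Real.sinh t) (Ici 0) := by
    apply strictMonoOn_of_deriv_pos (convex_Ici 0)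
    · exact (continuous_id.mul Real.continuous_cosh |>.sub Real.continuous_sinh).continuousOn
    · intro t ht
      rw [interior_Ici] at ht
      have hd : HasDerivAt (fun t : ℝ => t * Real.cosh t - Real.sinh t) (t * Real.sinh t) t := by
        have := ((hasDerivAt_id t).mul (Real.hasDerivAt_cosh t)).sub (Real.hasDerivAt_sinh t)
        convert (show HasDerivAt (fun t : ℝ => t * Real.cosh t - Real.sinh t) _ t from this) using 1; simp [id]
      rw [hd.deriv]
      exact mul_pos ht (Real.sinh_pos_iff.mpr ht)
  have := hmono Set.self_mem_Ici (Set.mem_Ici.mpr hu.le) hu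
  simp at this
  linarith

lemma lem_A {u : ℝ} (hu : 0 < u) : u < Real.sinh u * Real.cosh u := by
  have h2 : 2 * u < Real.sinh (2 * u) := Real.self_lt_sinh_iff.mpr (by linarith)
  rw [Real.sinh_two_mul] at h2
  linarith

lemma lem_phi {u : ℝ} (hu : 0 < u) :
    u * Real.sinh u ^ 2 + 3 * Real.sinh u * Real.cosh u - 3 * u * Real.cosh u ^ 2 < 0 := by
  have hanti : StrictAntiOn (fun t : ℝ => t * Real.sinh t ^ 2 + 3 * Real.sinh t * Real.cosh t - 3 * t * Real.cosh t ^ 2) (Ici 0) := by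
    apply strictAntiOn_of_deriv_neg (convex_Ici 0)
    · fun_prop
    · intro t ht
      rw [interior_Ici] at ht
      have hd : HasDerivAt (fun t : ℝ => t * Real.sinh t ^ 2 + 3 * Real.sinh t * Real.cosh t - 3 * t * Real.cosh t ^ 2)
          (4 * Real.sinh t * (Real.sinh t - t * Real.cosh t)) t := by
        have h1 := (hasDerivAt_id t).mul ((Real.hasDerivAt_sinh t).pow 2)
        have h2 := ((Real.hasDerivAt_sinh t).const_mul 3).mul (Real.hasDerivAt_cosh t)
        have h3 := ((hasDerivAt_const t (3:ℝ)).mul (hasDerivAt_id t)).mul ((Real.hasDerivAt_cosh t).pow 2)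
        have := (h1.add h2).sub h3
        convert (show HasDerivAt (fun t : ℝ => t * Real.sinh t ^ 2 + 3 * Real.sinh t * Real.cosh t - 3 * t * Real.cosh t ^ 2) _ t from this) using 1
        simp [id]
        ring
      rw [hd.deriv]
      have hs := Real.sinh_pos_iff.mpr ht
      have hk := lem_kappa ht
      nlinarith
  have := hanti Set.self_mem_Ici (Set.mem_Ici.mpr hu.le) hu
  simpa using this

lemma lem_h_anti : StrictAntiOn
    (fun t : ℝ => (t * Real.cosh t - Real.sinh t) / (t ^ 3 * Real.cosh t)) (Ioi 0) := by
  apply strictAntiOn_of_deriv_neg (convex_Ioi 0)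
  · apply ContinuousOn.div
    · fun_prop
    · fun_prop
    · intro t ht
      have hc := Real.cosh_pos (x := t)
      have ht' : (0:ℝ) < t := ht
      exact mul_ne_zero (pow_ne_zero 3 (ne_of_gt ht')) (ne_of_gt hc)
  · intro t ht
    rw [interior_Ioi] at ht
    have ht' : (0:ℝ) < t := ht
    have hc := Real.cosh_pos (x := t)
    have hD : t ^ 3 * Real.cosh t ≠ 0 := by positivity
    have hN : HasDerivAt (fun t : ℝ => t * Real.cosh t - Real.sinh t) (t * Real.sinh t) t := by
      have := ((hasDerivAt_id t).mul (Real.hasDerivAt_cosh t)).sub (Real.hasDerivAt_sinh t)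
      convert (show HasDerivAt (fun t : ℝ => t * Real.cosh t - Real.sinh t) _ t from this) using 1 <;> simp [id]
    have hDd : HasDerivAt (fun t : ℝ => t ^ 3 * Real.cosh t)
        (3 * t ^ 2 * Real.cosh t + t ^ 3 * Real.sinh t) t := by
      have := ((hasDerivAt_pow 3 t).mul (Real.hasDerivAt_cosh t))
      convert (show HasDerivAt (fun t : ℝ => t ^ 3 * Real.cosh t) _ t from this) using 1
      norm_num
    have hd := hN.div hDd hD
    rw [(show HasDerivAt (fun t : ℝ => (t * Real.cosh t - Real.sinh t) / (t ^ 3 * Real.cosh t)) _ t from hd).deriv]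
    apply div_neg_of_neg_of_pos
    · have key : t * Real.sinh t * (t ^ 3 * Real.cosh t) -
          (t * Real.cosh t - Real.sinh t) * (3 * t ^ 2 * Real.cosh t + t ^ 3 * Real.sinh t)
          = t ^ 2 * (t * Real.sinh t ^ 2 + 3 * Real.sinh t * Real.cosh t - 3 * t * Real.cosh t ^ 2) := by
        ring
      rw [key]
      exact mul_neg_of_pos_of_neg (pow_pos (Set.mem_Ioi.mp ht) 2) (lem_phi ht)
    · positivity
end AuxMassRatio

/-- The gravitational-to-bare mass ratio
`g(x) = (1/x)(1 − tanh(√(3x))/√(3x))` is strictly decreasing on `(0,∞)`. -/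
theorem mass_ratio_strictAnti :
    ∀ x₁ x₂ : ℝ, 0 < x₁ → x₁ < x₂ →
      (1 / x₂) * (1 - Real.tanh (Real.sqrt (3 * x₂)) / Real.sqrt (3 * x₂)) <
      (1 / x₁) * (1 - Real.tanh (Real.sqrt (3 * x₁)) / Real.sqrt (3 * x₁)) := by
  intro x₁ x₂ hx1 hlt
  have hx2 : 0 < x₂ := hx1.trans hlt
  set u₁ := Real.sqrt (3 * x₁) with hu1
  set u₂ := Real.sqrt (3 * x₂) with hu2
  have hu1p : 0 < u₁ := Real.sqrt_pos.mpr (by linarith)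
  have hu2p : 0 < u₂ := Real.sqrt_pos.mpr (by linarith)
  have hsq1 : u₁ ^ 2 = 3 * x₁ := Real.sq_sqrt (by linarith)
  have hsq2 : u₂ ^ 2 = 3 * x₂ := Real.sq_sqrt (by linarith)
  have hult : u₁ < u₂ := Real.sqrt_lt_sqrt (by linarith) (by linarith)
  have key : ∀ u x : ℝ, 0 < u → 0 < x → u ^ 2 = 3 * x →
      (1 / x) * (1 - Real.tanh u / u) =
      3 * ((u * Real.cosh u - Real.sinh u) / (u ^ 3 * Real.cosh u)) := by
    intro u x hu hx hsq
    rw [Real.tanh_eq_sinh_div_cosh]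
    have hc := Real.cosh_pos (x := u)
    field_simp
    linear_combination (Real.cosh u * u - Real.sinh u) * hsq
  rw [key u₁ x₁ hu1p hx1 hsq1, key u₂ x₂ hu2p hx2 hsq2]
  have := lem_h_anti (Set.mem_Ioi.mpr hu1p) (Set.mem_Ioi.mpr hu2p) hult
  linarith
end

section
/- Let ω, R > 0, let M_b, c > 0, and set Ψ(r) := sinh(ω·r)/(ω·r·cosh(ω·R)) for r ∈ (0,R]. Then the matter energy of the homogeneous star, E_matter := (3·M_b·c²/R³)·∫₀^R r²·Ψ(r)² dr, is given exactly by E_matter = 3·M_b·c²·(sinh(2ωR) − 2ωR)/(4·(ωR)³·cosh(ωR)²). -/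
open Real intervalIntegral

/-- Matter energy of a homogeneous star: with interior
solution `Ψ(r) = sinh(ωr)/(ωr·cosh(ωR))`, the matter energy
`E_matter = (3M_b c²/R³)·∫₀^R r²Ψ(r)² dr` equals
`3M_b c²·(sinh(2ωR) − 2ωR)/(4(ωR)³·cosh(ωR)²)`. -/
theorem homogeneous_star_matter_energy
    (ω R M_b c : ℝ) (hω : 0 < ω) (hR : 0 < R) (hMb : 0 < M_b) (hc : 0 < c) :
    (3 * M_b * c ^ 2 / R ^ 3) *
      ∫ r in (0:ℝ)..R,
        r ^ 2 * (Real.sinh (ω * r) / (ω * r * Real.cosh (ω * R))) ^ 2 =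
    3 * M_b * c ^ 2 * (Real.sinh (2 * ω * R) - 2 * ω * R) /
      (4 * (ω * R) ^ 3 * Real.cosh (ω * R) ^ 2) := by
  have hcosh : Real.cosh (ω * R) ≠ 0 := (Real.cosh_pos (ω * R)).ne'
  have hω' : ω ≠ 0 := hω.ne'
  have hcongr :
      ∫ r in (0:ℝ)..R,
          r ^ 2 * (Real.sinh (ω * r) / (ω * r * Real.cosh (ω * R))) ^ 2
        = ∫ r in (0:ℝ)..R,
          Real.sinh (ω * r) ^ 2 / (ω ^ 2 * Real.cosh (ω * R) ^ 2) := by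
    apply intervalIntegral.integral_congr_ae
    filter_upwards with x hx
    rw [Set.uIoc_of_le hR.le] at hx
    have hx0 : x ≠ 0 := ne_of_gt hx.1
    field_simp
  rw [hcongr]
  have hderiv : ∀ r ∈ Set.uIcc (0:ℝ) R,
      HasDerivAt (fun r => Real.sinh (2 * ω * r) / (4 * ω) - r / 2)
        (Real.sinh (ω * r) ^ 2) r := by
    intro r _
    have h1 : HasDerivAt (fun r : ℝ => 2 * ω * r) (2 * ω) r := by
      simpa using (hasDerivAt_id r).const_mul (2 * ω)
    have h2 := (Real.hasDerivAt_sinh (2 * ω * r)).comp r h1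
    have h3 := (h2.div_const (4 * ω)).sub ((hasDerivAt_id r).div_const 2)
    refine h3.congr_deriv ?_
    have hc2 : Real.cosh (2 * ω * r) = 2 * Real.sinh (ω * r) ^ 2 + 1 := by
      have := Real.cosh_two_mul (ω * r)
      have hs := Real.sinh_sq (ω * r)
      rw [show 2 * ω * r = 2 * (ω * r) by ring]
      rw [this, hs]; ring
    rw [hc2]
    field_simp
    ring
  have hint : IntervalIntegrable (fun r => Real.sinh (ω * r) ^ 2)
      MeasureTheory.volume 0 R :=
    (Continuous.pow (Real.continuous_sinh.comp (continuous_const.mul continuous_id)) 2).intervalIntegrable 0 R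
  have hI := intervalIntegral.integral_eq_sub_of_hasDerivAt hderiv hint
  rw [intervalIntegral.integral_div, hI]
  simp only [mul_zero, Real.sinh_zero, zero_div, sub_zero, zero_sub]
  field_simp
  ring
end
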